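/- Let x, y, B, k be positive integers. Then x/y = y + x/B^k (as an equation of rational numbers) holds if and only if (x + 2·B^k·y)^2 + (2·B^(2k))^2 = (x + 2·B^(2k))^2. -/

import Mathlib

/-- For positive integers x, y, B, k, the rational equation
x/y = y + x/B^k holds iff (x + 2·B^k·y)² + (2·B^(2k))² = (x + 2·B^(2k))². -/
theorem anomaly_iff_pythagorean (x y B k : ℕ) (hx : 0 < x) (hy : 0 < y)
    (hB : 0 < B) (hk : 0 < k) :
    (x : ℚ) / y = y + x / B ^ k ↔
      (x + 2 * B ^ k * y) ^ 2 + (2 * B ^ (2 * k)) ^ 2 = (x + 2 * B ^ (2 * k)) ^ 2 := by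
  have hy' : (y:ℚ) ≠ 0 := by positivity
  have hB' : (B:ℚ)^k ≠ 0 := by positivity
  have h1 : ((x : ℚ) / y = y + x / B ^ k) ↔ (x * B^k : ℚ) = y^2*B^k + x*y := by
    rw [div_eq_iff hy']
    constructor
    · intro h
      field_simp at h
      ring_nf at h ⊢
      linarith
    · intro h
      field_simp
      ring_nf at h ⊢
      linarith
  rw [h1]
  have h2 : ((x * B^k : ℚ) = y^2*B^k + x*y) ↔ (x * B^k = y^2*B^k + x*y) := by
    constructor
    · intro h; exact_mod_cast h
    · intro h; exact_mod_cast h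
  rw [h2]
  have hbk : B^(2*k) = B^k * B^k := by rw [two_mul, pow_add]
  rw [hbk]
  have hbpos : 0 < B^k := pow_pos hB k
  constructor
  · intro h
    have h4 : B^k * (x*B^k) = B^k*(y^2*B^k + x*y) := by rw [h]
    ring_nf at h4 ⊢
    linarith
  · intro h
    have h5 : B^k * (x*B^k) = B^k*(y^2*B^k + x*y) := by
      ring_nf at h ⊢
      linarith
    exact Nat.eq_of_mul_eq_mul_left hbpos h5
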